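/- Let L be the operator acting on functions f: ℝ → ℝ by (Lf)(x) = F(x)(f(x) - f(-x)) + G(x)(f(-x-1) - f(x)), where F(x) = (x-ρ₁)(x-ρ₂)/(2x) and G(x) = (x-r₁+1/2)(x-r₂+1/2)/(2x+1). Then for every polynomial p of degree n, Lp is a polynomial of degree at most n, with leading coefficient λₙ times that of p, where λₙ = n/2 if n is even and λₙ = r₁+r₂-ρ₁-ρ₂-(n+1)/2 if n is odd. -/

import Mathlib

open Polynomial

/-- The functions entering the Bannai–Ito Dunkl shift operator. -/
noncomputable def biF (ρ₁ ρ₂ x : ℝ) : ℝ := (x - ρ₁) * (x - ρ₂) / (2 * x)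

noncomputable def biG (r₁ r₂ x : ℝ) : ℝ := (x - r₁ + 1/2) * (x - r₂ + 1/2) / (2 * x + 1)

/-- The Bannai–Ito Dunkl shift operator. -/
noncomputable def biL (r₁ r₂ ρ₁ ρ₂ : ℝ) (f : ℝ → ℝ) (x : ℝ) : ℝ :=
  biF ρ₁ ρ₂ x * (f x - f (-x)) + biG r₁ r₂ x * (f (-x - 1) - f x)

/-- The eigenvalue λₙ. -/
noncomputable def biLam (r₁ r₂ ρ₁ ρ₂ : ℝ) (n : ℕ) : ℝ :=
  if Even n then (n : ℝ) / 2 else r₁ + r₂ - ρ₁ - ρ₂ - ((n : ℝ) + 1) / 2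

set_option maxRecDepth 4000

private lemma quad_eq (a b : ℝ) (f : ℝ[X]) :
    (X + C a) * (X + C b) * f = X * (X * f) + C (a + b) * (X * f) + C (a * b) * f := by
  simp only [C_add, C_mul]; ring

private lemma coeff_quad (a b : ℝ) (f : ℝ[X]) (j : ℕ) :
    ((X + C a) * (X + C b) * f).coeff (j + 2)
      = f.coeff j + (a + b) * f.coeff (j + 1) + a * b * f.coeff (j + 2) := by
  rw [quad_eq, show j + 2 = (j + 1) + 1 from rfl]
  simp [coeff_X_mul, coeff_C_mul, add_mul, mul_assoc]

private lemma coeff_quad_one (a b : ℝ) (f : ℝ[X]) :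
    ((X + C a) * (X + C b) * f).coeff 1
      = (a + b) * f.coeff 0 + a * b * f.coeff 1 := by
  rw [quad_eq, show (1:ℕ) = 0 + 1 from rfl]
  simp [coeff_X_mul, coeff_C_mul, add_mul, mul_assoc, mul_coeff_zero]

private lemma degC_mul_le (a : ℝ) (p : ℝ[X]) : (C a * p).degree ≤ p.degree := by
  refine le_trans (degree_mul_le _ _) ?_
  calc (C a).degree + p.degree ≤ 0 + p.degree := add_le_add degree_C_le le_rfl
  _ = p.degree := zero_add _

private lemma biL_mono (r₁ r₂ ρ₁ ρ₂ : ℝ) (n : ℕ) :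
    ∃ q : ℝ[X],
      (∀ x : ℝ, x ≠ 0 → 2 * x + 1 ≠ 0 →
        q.eval x = biL r₁ r₂ ρ₁ ρ₂ (fun t => t ^ n) x) ∧
      q.degree ≤ (n : ℕ) ∧ q.coeff n = biLam r₁ r₂ ρ₁ ρ₂ n := by
  set B : ℝ[X] := C ((-1 : ℝ) ^ n) * (X + 1) ^ n - X ^ n with hBdef
  have hBeval : ∀ x : ℝ, B.eval x = (-x - 1) ^ n - x ^ n := by
    intro x
    simp only [hBdef, eval_sub, eval_mul, eval_C, eval_pow, eval_add, eval_X, eval_one, one_pow]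
    rw [show (-x - 1 : ℝ) = -(x+1) by ring]
    conv_rhs => rw [neg_pow]
  have hroot : B.IsRoot (-(1/2)) := by
    have h1 : (-(-(1/2 : ℝ)) - 1) = -(1/2) := by norm_num
    rw [IsRoot, hBeval, h1, sub_self]
  obtain ⟨B', hB⟩ : X - C (-(1/2) : ℝ) ∣ B := dvd_iff_isRoot.mpr hroot
  rw [show X - C (-(1/2) : ℝ) = X + C (1/2) by rw [map_neg, sub_neg_eq_add]] at hB
  have hXC : (X + C (1/2 : ℝ)) ≠ 0 := X_add_C_ne_zero _
  have hBcoeff : ∀ j, B.coeff j = (-1 : ℝ) ^ n * (n.choose j) - (if j = n then 1 else 0) := by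
    intro j
    rw [hBdef, coeff_sub, coeff_C_mul, coeff_X_add_one_pow, coeff_X_pow]
  have hBdeg : B.degree ≤ (n : ℕ) := by
    refine le_trans (degree_sub_le _ _) ?_
    rw [sup_le_iff]
    refine ⟨le_trans (degC_mul_le _ _) (le_trans (degree_pow_le _ _) ?_), degree_X_pow_le n⟩
    rw [show ((X:ℝ[X]) + 1) = X + C 1 by simp, degree_X_add_C]
    simp
  have hrec : ∀ j, B'.coeff j = B.coeff (j + 1) - (1/2) * B'.coeff (j + 1) := by
    intro j
    rw [hB, show ((X + C (1/2 : ℝ)) * B') = X * B' + C (1/2) * B' by ring]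
    simp [coeff_X_mul, coeff_C_mul]
  have hB'0 : ∀ j, n ≤ j → B'.coeff j = 0 := by
    intro j hj
    rcases eq_or_ne B' 0 with h | h
    · simp [h]
    apply coeff_eq_zero_of_degree_lt
    have hd : B.degree = 1 + B'.degree := by rw [hB, degree_mul, degree_X_add_C]
    rw [degree_eq_natDegree h] at hd
    rw [degree_eq_natDegree h]
    rw [hd] at hBdeg
    have h2 : ((B'.natDegree + 1 : ℕ) : WithBot ℕ) ≤ (n : ℕ) := by push_cast; rwa [add_comm] at hBdeg
    have h3 : B'.natDegree + 1 ≤ n := by exact_mod_cast h2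
    exact_mod_cast by omega
  have hBfact : ∀ x : ℝ, (-x - 1) ^ n - x ^ n = (x + 1/2) * B'.eval x := by
    intro x
    rw [← hBeval, hB]
    simp [eval_mul, eval_add]
  rcases Nat.even_or_odd n with he | ho
  · -- even case
    rcases eq_or_ne n 0 with rfl | hn0
    · refine ⟨0, ?_, by simp, ?_⟩
      · intro x hx hx2
        simp [biL, biF, biG]
      · simp [biLam]
    obtain ⟨k, rfl⟩ : ∃ k, n = k + 2 := ⟨n - 2, by have := he.two_dvd; omega⟩
    have hneg1 : (-1 : ℝ) ^ (k + 2) = 1 := he.neg_one_pow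
    have hc1 : B'.coeff (k + 1) = 0 := by
      rw [hrec, hB'0 (k + 2) le_rfl, hBcoeff]
      simp [hneg1]
    have hc0 : B'.coeff k = (k : ℝ) + 2 := by
      rw [hrec, hc1, hBcoeff]
      have h2 : (k+1) ≠ (k+2) := by omega
      simp [h2, hneg1, Nat.choose_succ_self_right]
      push_cast
      ring
    have hB'0' : ∀ j, k + 1 ≤ j → B'.coeff j = 0 := by
      intro j hj
      rcases eq_or_lt_of_le hj with rfl | h
      · exact hc1
      · exact hB'0 j (by omega)
    refine ⟨C (1/2 : ℝ) * ((X + C (1/2 - r₁)) * (X + C (1/2 - r₂)) * B'), ?_, ?_, ?_⟩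
    · intro x hx hx2
      simp only [biL, biF, biG, eval_mul, eval_add, eval_X, eval_C]
      rw [he.neg_pow, hBfact x]
      field_simp
      ring
    · rw [degree_le_iff_coeff_zero]
      intro m hm
      have hm' : k + 2 < m := by exact_mod_cast hm
      obtain ⟨j, rfl⟩ : ∃ j, m = (j + k + 1) + 2 := ⟨m - k - 3, by omega⟩
      rw [coeff_C_mul, coeff_quad]
      rw [hB'0' _ (by omega), hB'0' _ (by omega), hB'0' _ (by omega)]
      ring
    · rw [coeff_C_mul, coeff_quad, hc0, hc1, hB'0 _ le_rfl, biLam, if_pos he]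
      push_cast
      ring
  · -- odd case
    obtain ⟨k, rfl⟩ : ∃ k, n = k + 1 := ⟨n - 1, by rcases ho with ⟨t, ht⟩; omega⟩
    have hneg1 : (-1 : ℝ) ^ (k + 1) = -1 := ho.neg_one_pow
    have hnev : ¬ Even (k + 1) := by rw [Nat.even_iff]; rw [Nat.odd_iff] at ho; omega
    have hck : B'.coeff k = -2 := by
      rw [hrec, hB'0 (k + 1) le_rfl, hBcoeff]
      simp [hneg1]
      norm_num
    have hB'0' : ∀ j, k ≤ j → B'.coeff j = 0 ∨ j = k := by
      intro j hj
      rcases eq_or_lt_of_le hj with rfl | h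
      · exact Or.inr rfl
      · exact Or.inl (hB'0 j (by omega))
    set f₁ : ℝ[X] := C (2:ℝ) * X ^ k with hf₁
    have hf₁c : ∀ j, f₁.coeff j = if j = k then 2 else 0 := by
      intro j
      rw [hf₁, coeff_C_mul, coeff_X_pow]
      split <;> norm_num
    refine ⟨C (1/2 : ℝ) * ((X + C (-ρ₁)) * (X + C (-ρ₂)) * f₁
        + (X + C (1/2 - r₁)) * (X + C (1/2 - r₂)) * B'), ?_, ?_, ?_⟩
    · intro x hx hx2
      simp only [biL, biF, biG, eval_mul, eval_add, eval_X, eval_C, eval_pow, hf₁]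
      rw [ho.neg_pow, hBfact x]
      field_simp
      ring
    · rw [degree_le_iff_coeff_zero]
      intro m hm
      have hm' : k + 1 < m := by exact_mod_cast hm
      rcases eq_or_lt_of_le (show k + 2 ≤ m by omega) with rfl | hm2
      · rw [coeff_C_mul, coeff_add, coeff_quad, coeff_quad, hck,
          hB'0 _ (by omega), hB'0 _ (by omega), hf₁c, hf₁c, hf₁c]
        have h1 : k ≠ k + 1 := by omega
        have h2 : ¬ (k + 1 = k) := by omega
        have h3 : ¬ (k + 2 = k) := by omega
        simp [h2, h3]
      · obtain ⟨j, rfl⟩ : ∃ j, m = (j + k + 1) + 2 := ⟨m - k - 3, by omega⟩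
        rw [coeff_C_mul, coeff_add, coeff_quad, coeff_quad,
          hB'0 _ (by omega), hB'0 _ (by omega), hB'0 _ (by omega), hf₁c, hf₁c, hf₁c]
        have h1 : ¬ (j + k + 1 = k) := by omega
        have h2 : ¬ (j + k + 1 + 1 = k) := by omega
        have h3 : ¬ (j + k + 1 + 2 = k) := by omega
        simp [h1, h2, h3]
    · rw [biLam, if_neg hnev, coeff_C_mul, coeff_add]
      rcases Nat.eq_zero_or_pos k with rfl | hk
      · rw [coeff_quad_one, coeff_quad_one, hB'0 _ le_rfl, hf₁c, hf₁c]
        rw [show B'.coeff 0 = -2 from hck]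
        norm_num
        ring
      · obtain ⟨j, rfl⟩ : ∃ j, k = j + 1 := ⟨k - 1, by omega⟩
        have hcj : B'.coeff j = -((j:ℝ) + 1) := by
          rw [hrec, hck, hBcoeff]
          have h1 : j + 1 ≠ j + 1 + 1 := by omega
          rw [Nat.choose_succ_self_right]
          simp [h1, hneg1]

        rw [show (j + 1) + 1 = j + 2 from rfl, coeff_quad, coeff_quad, hcj, hck,
          hB'0 _ (by omega), hf₁c, hf₁c, hf₁c]
        have h1 : ¬ (j = j + 1) := by omega
        have h2 : ¬ (j + 2 = j + 1) := by omega
        simp [h1, h2]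
        push_cast
        ring

private lemma biL_full (r₁ r₂ ρ₁ ρ₂ : ℝ) : ∀ (N : ℕ) (p : ℝ[X]), p.natDegree ≤ N →
    ∃ q : ℝ[X],
      (∀ x : ℝ, x ≠ 0 → 2 * x + 1 ≠ 0 →
        q.eval x = biL r₁ r₂ ρ₁ ρ₂ (fun t => p.eval t) x) ∧
      q.degree ≤ p.degree ∧
      q.coeff p.natDegree = biLam r₁ r₂ ρ₁ ρ₂ p.natDegree * p.leadingCoeff := by
  intro N
  induction N with
  | zero =>
    intro p hp
    obtain ⟨a, rfl⟩ := Polynomial.natDegree_eq_zero.mp (Nat.le_zero.mp hp)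
    refine ⟨0, ?_, bot_le, ?_⟩
    · intro x hx hx2
      simp [biL, biF, biG]
    · simp [biLam]
  | succ N ih =>
    intro p hp
    rcases eq_or_ne p 0 with rfl | hp0
    · refine ⟨0, ?_, bot_le, ?_⟩
      · intro x hx hx2
        simp [biL, biF, biG]
      · simp
    by_cases hN : p.natDegree ≤ N
    · exact ih p hN
    have hd : p.natDegree = N + 1 := by omega
    obtain ⟨q1, hq1e, hq1d, hq1c⟩ := biL_mono r₁ r₂ ρ₁ ρ₂ p.natDegree
    obtain ⟨q2, hq2e, hq2d, _⟩ := ih p.eraseLead (by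
      have := eraseLead_natDegree_le p
      omega)
    have hpe : ∀ t : ℝ, p.eval t = p.eraseLead.eval t + p.leadingCoeff * t ^ p.natDegree := by
      intro t
      have h := congrArg (eval t) (eraseLead_add_C_mul_X_pow p)
      simp only [eval_add, eval_mul, eval_C, eval_pow, eval_X] at h
      linarith [h]
    have hlt : q2.degree < (p.natDegree : WithBot ℕ) := by
      rw [← degree_eq_natDegree hp0]
      exact lt_of_le_of_lt hq2d (degree_eraseLead_lt hp0)
    refine ⟨C p.leadingCoeff * q1 + q2, ?_, ?_, ?_⟩
    · intro x hx hx2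
      rw [eval_add, eval_mul, eval_C, hq1e x hx hx2, hq2e x hx hx2]
      simp only [biL, biF, biG]
      rw [hpe x, hpe (-x), hpe (-x - 1)]
      ring
    · refine le_trans (degree_add_le _ _) (sup_le ?_ (le_trans hq2d (le_of_lt (degree_eraseLead_lt hp0))))
      refine le_trans (degC_mul_le _ _) ?_
      rw [degree_eq_natDegree hp0]
      exact hq1d
    · rw [coeff_add, coeff_C_mul, hq1c, coeff_eq_zero_of_degree_lt hlt]
      ring


/-- L maps any polynomial of degree n to a polynomial of degree at most n whose
coefficient of degree n is λₙ times the leading coefficient of p. -/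
theorem stmt0 (r₁ r₂ ρ₁ ρ₂ : ℝ) (p : Polynomial ℝ) (hp : p ≠ 0) :
    ∃ q : Polynomial ℝ,
      (∀ x : ℝ, x ≠ 0 → 2 * x + 1 ≠ 0 →
        q.eval x = biL r₁ r₂ ρ₁ ρ₂ (fun t => p.eval t) x) ∧
      q.degree ≤ p.degree ∧
      q.coeff p.natDegree = biLam r₁ r₂ ρ₁ ρ₂ p.natDegree * p.leadingCoeff := by
  exact biL_full r₁ r₂ ρ₁ ρ₂ p.natDegree p le_rfl
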